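/- arXiv:2306.13239 — 2 statements merged into one kernel-verified Lean document; each statement's English description precedes it below -/
import Mathlib

section
/- (Lower bound part of the induced-regularizer computation) For any factorization W_L⋯W_1 = M with W_i ∈ ℝ^{d_i×d_{i−1}}, the quantity R(W) = d_0‖W_L⋯W_2‖_F² + Σ_{j=2}^{L−1}‖W_L⋯W_{j+1}‖_F²‖W_{j−1}⋯W_1‖_F² + d_L‖W_{L−1}⋯W_1‖_F² satisfies R(W) ≥ L(d_0 d_L)^{1/L}‖M‖_*^{2(L−1)/L}. -/
open Matrix Finset

noncomputable def frobNorm {m n : Type*} [Fintype m] [Fintype n] (M : Matrix m n ℝ) : ℝ :=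
  Real.sqrt (∑ i, ∑ j, (M i j) ^ 2)

noncomputable def nuclearNorm {m n : Type*} [Fintype m] [Fintype n] [DecidableEq n]
    (M : Matrix m n ℝ) : ℝ :=
  ∑ i, Real.sqrt ((show (Mᵀ * M).IsHermitian by
    simpa [Matrix.conjTranspose_eq_transpose_of_trivial] using
      Matrix.isHermitian_conjTranspose_mul_self M).eigenvalues i)

lemma frobNorm_nonneg {m n : Type*} [Fintype m] [Fintype n] (X : Matrix m n ℝ) :
    0 ≤ frobNorm X := Real.sqrt_nonneg _

lemma frobNorm_sq {m n : Type*} [Fintype m] [Fintype n] (X : Matrix m n ℝ) :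
    frobNorm X ^ 2 = (Xᵀ * X).trace := by
  rw [frobNorm, Real.sq_sqrt (by positivity)]
  rw [Matrix.trace]
  simp only [Matrix.diag_apply, Matrix.mul_apply, Matrix.transpose_apply, ← pow_two]
  exact Finset.sum_comm

lemma trace_transpose_mul_self_nonneg {m n : Type*} [Fintype m] [Fintype n]
    (X : Matrix m n ℝ) : 0 ≤ (Xᵀ * X).trace := by
  rw [← frobNorm_sq]; positivity

lemma trace_inner_le {p q : Type*} [Fintype p] [Fintype q] (X Y : Matrix p q ℝ) :
    (Xᵀ * Y).trace ≤ frobNorm X * frobNorm Y := by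
  have h1 : (Xᵀ * Y).trace = ∑ ij : p × q, X ij.1 ij.2 * Y ij.1 ij.2 := by
    rw [Fintype.sum_prod_type, Matrix.trace]
    simp only [Matrix.diag_apply, Matrix.mul_apply, Matrix.transpose_apply]
    exact Finset.sum_comm
  have hX : frobNorm X = Real.sqrt (∑ ij : p × q, X ij.1 ij.2 ^ 2) := by
    rw [frobNorm, Fintype.sum_prod_type]
  have hY : frobNorm Y = Real.sqrt (∑ ij : p × q, Y ij.1 ij.2 ^ 2) := by
    rw [frobNorm, Fintype.sum_prod_type]
  have h2 := Finset.sum_mul_sq_le_sq_mul_sq Finset.univ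
    (fun ij : p × q => X ij.1 ij.2) (fun ij : p × q => Y ij.1 ij.2)
  calc (Xᵀ * Y).trace ≤ |(Xᵀ * Y).trace| := le_abs_self _
    _ = Real.sqrt ((Xᵀ * Y).trace ^ 2) := (Real.sqrt_sq_eq_abs _).symm
    _ ≤ Real.sqrt ((∑ ij : p × q, X ij.1 ij.2 ^ 2) * ∑ ij : p × q, Y ij.1 ij.2 ^ 2) := by
        apply Real.sqrt_le_sqrt; rw [h1]; exact h2
    _ = frobNorm X * frobNorm Y := by
        rw [hX, hY, ← Real.sqrt_mul (by positivity)]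

lemma nuclearNorm_mul_le {m k n : Type*} [Fintype m] [Fintype k] [Fintype n]
    [DecidableEq n] [DecidableEq m] (A : Matrix m k ℝ) (B : Matrix k n ℝ) :
    nuclearNorm (A * B) ≤ frobNorm A * frobNorm B := by
  set C := A * B with hC
  have hH : (Cᵀ * C).IsHermitian := by
    simpa [Matrix.conjTranspose_eq_transpose_of_trivial] using
      Matrix.isHermitian_conjTranspose_mul_self C
  set lam := hH.eigenvalues with hlam
  have hlam0 : ∀ i, 0 ≤ lam i := fun i =>
    (Matrix.posSemidef_conjTranspose_mul_self C).eigenvalues_nonneg i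
  set V : Matrix n n ℝ := (hH.eigenvectorUnitary : Matrix n n ℝ) with hV
  have hstar : star V = Vᵀ := by
    rw [Matrix.star_eq_conjTranspose, Matrix.conjTranspose_eq_transpose_of_trivial]
  have hV1 : V * Vᵀ = 1 := by
    rw [← hstar]; exact (Matrix.mem_unitaryGroup_iff).mp hH.eigenvectorUnitary.2
  have hV2 : Vᵀ * V = 1 := by
    rw [← hstar]; exact (Matrix.mem_unitaryGroup_iff').mp hH.eigenvectorUnitary.2
  have hdiag : Vᵀ * (Cᵀ * C) * V = Matrix.diagonal lam := by
    have h : star V * (Cᵀ * C) * V = Matrix.diagonal (RCLike.ofReal ∘ hH.eigenvalues) := by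
      have h' := hH.conjStarAlgAut_star_eigenvectorUnitary
      rw [Unitary.conjStarAlgAut_apply] at h'
      simpa [hV] using h'
    rw [hstar] at h
    simpa [Matrix.conjTranspose_eq_transpose_of_trivial, RCLike.ofReal_real_eq_id] using h
  set dv : n → ℝ := fun i => if lam i = 0 then 0 else (Real.sqrt (lam i))⁻¹ with hdv
  set D : Matrix n n ℝ := Matrix.diagonal dv with hD
  set U : Matrix m n ℝ := C * V * D with hU
  have hUt : Uᵀ = D * (Vᵀ * Cᵀ) := by
    rw [hU, Matrix.transpose_mul, Matrix.transpose_mul, Matrix.diagonal_transpose, ← hD]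
  have hdvmul : (fun i => dv i * lam i) = fun i => Real.sqrt (lam i) := by
    funext i
    by_cases h : lam i = 0
    · simp [hdv, h]
    · have hpos : 0 < lam i := lt_of_le_of_ne (hlam0 i) (Ne.symm h)
      have hs : Real.sqrt (lam i) ≠ 0 := ne_of_gt (Real.sqrt_pos.mpr hpos)
      simp only [hdv, if_neg h]
      field_simp
      simp only [Real.sq_sqrt (hlam0 i)]
  have key1 : Uᵀ * C * V = Matrix.diagonal (fun i => Real.sqrt (lam i)) := by
    have e1 : Uᵀ * C * V = D * (Vᵀ * (Cᵀ * C) * V) := by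
      rw [hUt]; simp only [Matrix.mul_assoc]
    rw [e1, hdiag, hD, Matrix.diagonal_mul_diagonal, hdvmul]
  -- e-values of projection
  set ev : n → ℝ := fun i => if lam i = 0 then 0 else 1 with hev
  have hdvlamdv : (fun i => dv i * lam i * dv i) = ev := by
    funext i
    by_cases h : lam i = 0
    · simp [hdv, hev, h]
    · have hpos : 0 < lam i := lt_of_le_of_ne (hlam0 i) (Ne.symm h)
      have hs : Real.sqrt (lam i) ≠ 0 := ne_of_gt (Real.sqrt_pos.mpr hpos)
      simp only [hdv, hev, if_neg h]
      rw [← Real.mul_self_sqrt (hlam0 i)]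
      field_simp
      simp only [Real.sq_sqrt (hlam0 i)]
  have key2 : Uᵀ * U = Matrix.diagonal ev := by
    have e1 : Uᵀ * U = D * (Vᵀ * (Cᵀ * C) * V) * D := by
      rw [hUt, hU]; simp only [Matrix.mul_assoc]
    rw [e1, hdiag, hD, Matrix.diagonal_mul_diagonal, Matrix.diagonal_mul_diagonal, hdvlamdv]
  have hDev : D * Matrix.diagonal ev = D := by
    have hfe : (fun i => dv i * ev i) = dv := by
      funext i; by_cases h : lam i = 0 <;> simp [hdv, hev, h]
    rw [hD, Matrix.diagonal_mul_diagonal, hfe]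
  have hUev : U * Matrix.diagonal ev = U := by
    rw [hU, Matrix.mul_assoc, hDev]
  set Pr : Matrix m m ℝ := U * Uᵀ with hPr
  have hPrT : Prᵀ = Pr := by
    rw [hPr, Matrix.transpose_mul, Matrix.transpose_transpose]
  have hPr2 : Pr * Pr = Pr := by
    rw [hPr]
    calc U * Uᵀ * (U * Uᵀ) = U * (Uᵀ * U) * Uᵀ := by simp only [Matrix.mul_assoc]
      _ = U * Matrix.diagonal ev * Uᵀ := by rw [key2]
      _ = U * Uᵀ := by rw [hUev]
  -- nuclearNorm C = trace (Uᵀ C V)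
  have key3 : nuclearNorm C = (Uᵀ * C * V).trace := by
    rw [key1, Matrix.trace_diagonal, nuclearNorm]
  -- Cauchy–Schwarz step
  have key4 : (Uᵀ * C * V).trace ≤ frobNorm (Aᵀ * U) * frobNorm (B * V) := by
    have e1 : (Aᵀ * U)ᵀ * (B * V) = Uᵀ * C * V := by
      rw [Matrix.transpose_mul, Matrix.transpose_transpose]
      simp only [hC, Matrix.mul_assoc]
    rw [← e1]
    exact trace_inner_le _ _
  -- frobNorm (B * V) = frobNorm B
  have key5 : frobNorm (B * V) = frobNorm B := by
    have e1 : frobNorm (B * V) ^ 2 = frobNorm B ^ 2 := by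
      rw [frobNorm_sq, frobNorm_sq, Matrix.transpose_mul]
      calc (Vᵀ * Bᵀ * (B * V)).trace = ((Vᵀ * Bᵀ * B) * V).trace := by
            simp only [Matrix.mul_assoc]
        _ = (V * (Vᵀ * Bᵀ * B)).trace := Matrix.trace_mul_comm _ _
        _ = ((V * Vᵀ) * (Bᵀ * B)).trace := by simp only [Matrix.mul_assoc]
        _ = (Bᵀ * B).trace := by rw [hV1, Matrix.one_mul]
    have := congrArg Real.sqrt e1
    rwa [Real.sqrt_sq (frobNorm_nonneg _), Real.sqrt_sq (frobNorm_nonneg _)] at this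
  -- frobNorm (Aᵀ * U) ≤ frobNorm A
  have key6 : frobNorm (Aᵀ * U) ≤ frobNorm A := by
    have e1 : frobNorm (Aᵀ * U) ^ 2 = ((A * Aᵀ) * Pr).trace := by
      rw [frobNorm_sq, Matrix.transpose_mul, Matrix.transpose_transpose]
      calc (Uᵀ * A * (Aᵀ * U)).trace = (Uᵀ * (A * Aᵀ * U)).trace := by
            simp only [Matrix.mul_assoc]
        _ = ((A * Aᵀ * U) * Uᵀ).trace := Matrix.trace_mul_comm _ _
        _ = ((A * Aᵀ) * Pr).trace := by rw [hPr]; simp only [Matrix.mul_assoc]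
    have e2 : frobNorm A ^ 2 = ((A * Aᵀ)).trace := by
      rw [frobNorm_sq, Matrix.trace_mul_comm]
    have e3 : ((A * Aᵀ) * Pr).trace ≤ (A * Aᵀ).trace := by
      have hQ2 : (1 - Pr) * (1 - Pr) = 1 - Pr := by
        rw [Matrix.sub_mul, Matrix.mul_sub, Matrix.mul_sub, hPr2]
        simp only [Matrix.one_mul, Matrix.mul_one]
        abel
      have hQT : (1 - Pr)ᵀ = 1 - Pr := by
        rw [Matrix.transpose_sub, Matrix.transpose_one, hPrT]
      have hsub : (((1 - Pr) * A)ᵀ * ((1 - Pr) * A)).trace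
          = (A * Aᵀ).trace - ((A * Aᵀ) * Pr).trace := by
        have h1 : ((1 - Pr) * A)ᵀ * ((1 - Pr) * A) = Aᵀ * ((1 - Pr) * A) := by
          calc ((1 - Pr) * A)ᵀ * ((1 - Pr) * A)
              = Aᵀ * ((1 - Pr) * ((1 - Pr) * A)) := by
                rw [Matrix.transpose_mul, hQT, Matrix.mul_assoc]
            _ = Aᵀ * (((1 - Pr) * (1 - Pr)) * A) := by rw [Matrix.mul_assoc]
            _ = Aᵀ * ((1 - Pr) * A) := by rw [hQ2]
        rw [h1]
        calc (Aᵀ * ((1 - Pr) * A)).trace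
            = (((1 - Pr) * A) * Aᵀ).trace := Matrix.trace_mul_comm _ _
          _ = ((1 - Pr) * (A * Aᵀ)).trace := by rw [Matrix.mul_assoc]
          _ = (A * Aᵀ).trace - ((A * Aᵀ) * Pr).trace := by
              rw [Matrix.sub_mul, Matrix.one_mul, Matrix.trace_sub,
                Matrix.trace_mul_comm Pr]
      have hnn := trace_transpose_mul_self_nonneg ((1 - Pr) * A)
      linarith [hsub ▸ hnn]
    have e4 : frobNorm (Aᵀ * U) ^ 2 ≤ frobNorm A ^ 2 := by rw [e1, e2]; exact e3
    have h5 := Real.sqrt_le_sqrt e4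
    rwa [Real.sqrt_sq (frobNorm_nonneg _), Real.sqrt_sq (frobNorm_nonneg _)] at h5
  calc nuclearNorm C = (Uᵀ * C * V).trace := key3
    _ ≤ frobNorm (Aᵀ * U) * frobNorm (B * V) := key4
    _ = frobNorm (Aᵀ * U) * frobNorm B := by rw [key5]
    _ ≤ frobNorm A * frobNorm B :=
        mul_le_mul_of_nonneg_right key6 (frobNorm_nonneg _)



/-- Lower bound part: R(W) ≥ L (d_0 d_L)^{1/L} ‖M‖_*^{2(L-1)/L} for every
    factorization W_L ⋯ W_1 = M. -/
theorem R_ge {L : ℕ} (hL : 2 ≤ L) (d : ℕ → ℕ)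
    (W : ∀ i : ℕ, Matrix (Fin (d (i + 1))) (Fin (d i)) ℝ)
    (P : ∀ j : ℕ, Matrix (Fin (d L)) (Fin (d j)) ℝ)
    (Q : ∀ j : ℕ, Matrix (Fin (d j)) (Fin (d 0)) ℝ)
    (hPL : P L = 1) (hP : ∀ j, j < L → P j = P (j + 1) * W j)
    (hQ0 : Q 0 = 1) (hQ : ∀ j, j < L → Q (j + 1) = W j * Q j)
    (M : Matrix (Fin (d L)) (Fin (d 0)) ℝ) (hM : Q L = M) :
    (L : ℝ) * ((d 0 : ℝ) * (d L : ℝ)) ^ ((1 : ℝ) / L)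
        * nuclearNorm M ^ ((2 * ((L : ℝ) - 1)) / L)
      ≤ ((d 0 : ℝ) * frobNorm (P 1) ^ 2
          + ∑ j ∈ Finset.Icc 2 (L - 1), frobNorm (P j) ^ 2 * frobNorm (Q (j - 1)) ^ 2
          + (d L : ℝ) * frobNorm (Q (L - 1)) ^ 2) := by
  -- P j * Q j = M for all j ≤ L
  have key : ∀ kk, kk ≤ L → P (L - kk) * Q (L - kk) = M := by
    intro kk
    induction kk with
    | zero =>
      intro _
      rw [Nat.sub_zero, hPL, Matrix.one_mul, hM]
    | succ t ih =>
      intro ht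
      have hlt : L - (t + 1) < L := by omega
      have hsucc : L - (t + 1) + 1 = L - t := by omega
      rw [hP _ hlt, Matrix.mul_assoc, ← hQ _ hlt, hsucc]
      exact ih (by omega)
  have keyj : ∀ j, j ≤ L → P j * Q j = M := by
    intro j hj
    have h := key (L - j) (by omega)
    rwa [Nat.sub_sub_self hj] at h
  have keyn : ∀ j, j ≤ L → nuclearNorm M ≤ frobNorm (P j) * frobNorm (Q j) := by
    intro j hj
    have h := nuclearNorm_mul_le (P j) (Q j)
    rwa [keyj j hj] at h
  obtain ⟨N, rfl⟩ : ∃ N, L = N + 2 := ⟨L - 2, by omega⟩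
  clear hL
  have hsub1 : N + 2 - 1 = N + 1 := by omega
  rw [hsub1]
  have hnuc0 : 0 ≤ nuclearNorm M := Finset.sum_nonneg fun _ _ => Real.sqrt_nonneg _
  set a : ℕ → ℝ := fun j => if j = N + 2 then (d (N + 2) : ℝ) else frobNorm (P j) ^ 2 with ha
  set b : ℕ → ℝ := fun j => if j = 0 then (d 0 : ℝ) else frobNorm (Q j) ^ 2 with hb
  set z : ℕ → ℝ := fun j => a (j + 1) * b j with hz
  have ha0 : ∀ j, 0 ≤ a j := by
    intro j; simp only [ha]; split <;> positivity
  have hb0 : ∀ j, 0 ≤ b j := by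
    intro j; simp only [hb]; split <;> positivity
  have hz0 : ∀ j, 0 ≤ z j := fun j => mul_nonneg (ha0 _) (hb0 _)
  -- the sum identity
  have hsum : (d 0 : ℝ) * frobNorm (P 1) ^ 2
      + (∑ j ∈ Finset.Icc 2 (N + 1), frobNorm (P j) ^ 2 * frobNorm (Q (j - 1)) ^ 2)
      + (d (N + 2) : ℝ) * frobNorm (Q (N + 1)) ^ 2
      = ∑ j ∈ Finset.range (N + 2), z j := by
    rw [Finset.sum_range_succ, Finset.sum_range_succ']
    have h0 : z 0 = (d 0 : ℝ) * frobNorm (P 1) ^ 2 := by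
      have hne : (0 : ℕ) + 1 ≠ N + 2 := by omega
      simp [hz, ha, hb, hne]
      ring
    have hN1 : z (N + 1) = (d (N + 2) : ℝ) * frobNorm (Q (N + 1)) ^ 2 := by
      have he : N + 1 + 1 = N + 2 := by omega
      have hne : N + 1 ≠ 0 := by omega
      simp [hz, ha, hb, he, hne]
    have hmid : ∑ j ∈ Finset.Icc 2 (N + 1), frobNorm (P j) ^ 2 * frobNorm (Q (j - 1)) ^ 2
        = ∑ j ∈ Finset.range N, z (j + 1) := by
      rw [← Finset.Ico_add_one_right_eq_Icc, Finset.sum_Ico_eq_sum_range]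
      rw [show N + 1 + 1 - 2 = N from by omega]
      apply Finset.sum_congr rfl
      intro j hj
      simp only [Finset.mem_range] at hj
      rw [show 2 + j = j + 1 + 1 from by omega, show j + 1 + 1 - 1 = j + 1 from by omega]
      simp only [hz, ha, hb]
      rw [if_neg (show ¬ (j + 1 + 1 = N + 2) from by omega),
        if_neg (show ¬ (j + 1 = 0) from by omega)]
    rw [h0, hN1, hmid]
    ring
  -- the product bound
  have hprod : (d 0 : ℝ) * (d (N + 2) : ℝ) * nuclearNorm M ^ (2 * (N + 1))
      ≤ ∏ j ∈ Finset.range (N + 2), z j := by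
    have hps : ∏ j ∈ Finset.range (N + 2), z j
        = (d (N + 2) : ℝ) * (d 0 : ℝ)
          * ∏ j ∈ Finset.range (N + 1), (a (j + 1) * b (j + 1)) := by
      simp only [hz]
      rw [Finset.prod_mul_distrib, Finset.prod_range_succ (fun j => a (j + 1)),
        Finset.prod_range_succ' b]
      have haL : a (N + 1 + 1) = (d (N + 2) : ℝ) := by
        have he : N + 1 + 1 = N + 2 := by omega
        simp [ha, he]
      have hb0' : b 0 = (d 0 : ℝ) := by simp [hb]
      rw [haL, hb0', Finset.prod_mul_distrib]
      ring
    rw [hps]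
    have hterm : ∀ j ∈ Finset.range (N + 1),
        nuclearNorm M ^ 2 ≤ a (j + 1) * b (j + 1) := by
      intro j hj
      simp only [Finset.mem_range] at hj
      simp only [ha, hb]
      rw [if_neg (show ¬ (j + 1 = N + 2) from by omega),
        if_neg (show ¬ (j + 1 = 0) from by omega), ← mul_pow]
      exact pow_le_pow_left₀ hnuc0 (keyn (j + 1) (by omega)) 2
    calc (d 0 : ℝ) * (d (N + 2) : ℝ) * nuclearNorm M ^ (2 * (N + 1))
        = (d (N + 2) : ℝ) * (d 0 : ℝ) * ∏ _j ∈ Finset.range (N + 1), nuclearNorm M ^ 2 := by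
          rw [Finset.prod_const, Finset.card_range, ← pow_mul]; ring
      _ ≤ _ := by
          apply mul_le_mul_of_nonneg_left _ (by positivity)
          exact Finset.prod_le_prod (fun j _ => by positivity) hterm
  -- AM-GM
  have hLpos : (0 : ℝ) < ((N + 2 : ℕ) : ℝ) := by positivity
  have hsumz : ((N + 2 : ℕ) : ℝ)
        * (∏ j ∈ Finset.range (N + 2), z j) ^ ((1 : ℝ) / ((N + 2 : ℕ) : ℝ))
      ≤ ∑ j ∈ Finset.range (N + 2), z j := by
    have hw : ∑ _j ∈ Finset.range (N + 2), (1 : ℝ) / ((N + 2 : ℕ) : ℝ) = 1 := by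
      rw [Finset.sum_const, Finset.card_range, nsmul_eq_mul]
      field_simp
    have hgm := Real.geom_mean_le_arith_mean_weighted (Finset.range (N + 2))
      (fun _ => (1 : ℝ) / ((N + 2 : ℕ) : ℝ)) z (fun i _ => by positivity) hw
      (fun i _ => hz0 i)
    rw [Real.finset_prod_rpow _ _ (fun i _ => hz0 i) _, ← Finset.mul_sum] at hgm
    calc ((N + 2 : ℕ) : ℝ) * (∏ j ∈ Finset.range (N + 2), z j) ^ ((1 : ℝ) / ((N + 2 : ℕ) : ℝ))
        ≤ ((N + 2 : ℕ) : ℝ) * ((1 : ℝ) / ((N + 2 : ℕ) : ℝ)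
            * ∑ j ∈ Finset.range (N + 2), z j) :=
          mul_le_mul_of_nonneg_left hgm (le_of_lt hLpos)
      _ = ∑ j ∈ Finset.range (N + 2), z j := by field_simp
  -- combine the rpow pieces
  have hmain : ((d 0 : ℝ) * (d (N + 2) : ℝ)) ^ ((1 : ℝ) / ((N + 2 : ℕ) : ℝ))
        * nuclearNorm M ^ ((2 * (((N + 2 : ℕ) : ℝ) - 1)) / ((N + 2 : ℕ) : ℝ))
      ≤ (∏ j ∈ Finset.range (N + 2), z j) ^ ((1 : ℝ) / ((N + 2 : ℕ) : ℝ)) := by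
    have h1 : ((d 0 : ℝ) * (d (N + 2) : ℝ) * nuclearNorm M ^ (2 * (N + 1)))
            ^ ((1 : ℝ) / ((N + 2 : ℕ) : ℝ))
        = ((d 0 : ℝ) * (d (N + 2) : ℝ)) ^ ((1 : ℝ) / ((N + 2 : ℕ) : ℝ))
          * nuclearNorm M ^ ((2 * (((N + 2 : ℕ) : ℝ) - 1)) / ((N + 2 : ℕ) : ℝ)) := by
      rw [Real.mul_rpow (by positivity) (by positivity)]
      congr 1
      rw [← Real.rpow_natCast (nuclearNorm M) (2 * (N + 1)), ← Real.rpow_mul hnuc0]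
      congr 1
      have hne : ((N + 2 : ℕ) : ℝ) ≠ 0 := ne_of_gt hLpos
      field_simp
      push_cast
      ring
    rw [← h1]
    exact Real.rpow_le_rpow (by positivity) hprod (by positivity)
  calc ((N + 2 : ℕ) : ℝ) * ((d 0 : ℝ) * (d (N + 2) : ℝ)) ^ ((1 : ℝ) / ((N + 2 : ℕ) : ℝ))
        * nuclearNorm M ^ ((2 * (((N + 2 : ℕ) : ℝ) - 1)) / ((N + 2 : ℕ) : ℝ))
      = ((N + 2 : ℕ) : ℝ) * (((d 0 : ℝ) * (d (N + 2) : ℝ)) ^ ((1 : ℝ) / ((N + 2 : ℕ) : ℝ))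
          * nuclearNorm M ^ ((2 * (((N + 2 : ℕ) : ℝ) - 1)) / ((N + 2 : ℕ) : ℝ))) := by ring
    _ ≤ ((N + 2 : ℕ) : ℝ)
          * (∏ j ∈ Finset.range (N + 2), z j) ^ ((1 : ℝ) / ((N + 2 : ℕ) : ℝ)) :=
        mul_le_mul_of_nonneg_left hmain (le_of_lt hLpos)
    _ ≤ ∑ j ∈ Finset.range (N + 2), z j := hsumz
    _ = _ := hsum.symm
end

section
/- Suppose A_1,…,A_n ∈ ℝ^{d×d'} satisfy (2,δ)-RIP, i.e. for every matrix X of rank at most 2, (1−δ)‖X‖_F² ≤ (1/n)Σ_i⟨A_i,X⟩² ≤ (1+δ)‖X‖_F². Then for every matrix M ∈ ℝ^{d×d'}: |(1/n)Σ_{i=1}^n ⟨A_i,M⟩² − ‖M‖_F²| ≤ 2δ‖M‖_*². -/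
open Matrix Finset

/-- trace inner product ⟨A, B⟩ = tr(Aᵀ B). -/
noncomputable def minner {m n : Type*} [Fintype m] [Fintype n] (A B : Matrix m n ℝ) : ℝ :=
  Matrix.trace (Aᵀ * B)

/-- (r, δ)-RIP for the family of measurement matrices A. -/
noncomputable def RIP {dL d0 n : ℕ} (r : ℕ) (δ : ℝ)
    (A : Fin n → Matrix (Fin dL) (Fin d0) ℝ) : Prop :=
  ∀ X : Matrix (Fin dL) (Fin d0) ℝ, X.rank ≤ r →
    (1 - δ) * frobNorm X ^ 2 ≤ (1 / (n : ℝ)) * ∑ i, minner (A i) X ^ 2 ∧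
    (1 / (n : ℝ)) * ∑ i, minner (A i) X ^ 2 ≤ (1 + δ) * frobNorm X ^ 2

section Aux
variable {m n : Type*} [Fintype m] [Fintype n]

lemma minner_self_eq (X : Matrix m n ℝ) : minner X X = ∑ i, ∑ j, X i j ^ 2 := by
  simp only [minner, Matrix.trace, Matrix.diag, Matrix.mul_apply, Matrix.transpose_apply, pow_two]
  exact Finset.sum_comm

lemma frob_sq (X : Matrix m n ℝ) : frobNorm X ^ 2 = minner X X := by
  rw [frobNorm, Real.sq_sqrt (by positivity), minner_self_eq]

lemma minner_comm (X Y : Matrix m n ℝ) : minner X Y = minner Y X := by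
  rw [minner, minner, ← Matrix.trace_transpose, Matrix.transpose_mul, Matrix.transpose_transpose]

lemma minner_add_right (A X Y : Matrix m n ℝ) : minner A (X + Y) = minner A X + minner A Y := by
  simp [minner, Matrix.mul_add]

lemma minner_sub_right (A X Y : Matrix m n ℝ) : minner A (X - Y) = minner A X - minner A Y := by
  simp [minner, Matrix.mul_sub]

lemma minner_smul_right (A : Matrix m n ℝ) (c : ℝ) (X : Matrix m n ℝ) :
    minner A (c • X) = c * minner A X := by
  simp [minner, Matrix.mul_smul]

lemma minner_smul_left (A : Matrix m n ℝ) (c : ℝ) (X : Matrix m n ℝ) :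
    minner (c • X) A = c * minner X A := by
  rw [minner_comm, minner_smul_right, minner_comm]

lemma minner_add_left (A X Y : Matrix m n ℝ) : minner (X + Y) A = minner X A + minner Y A := by
  rw [minner_comm, minner_add_right, minner_comm A X, minner_comm A Y]

lemma minner_sum_right {ι : Type*} (s : Finset ι) (A : Matrix m n ℝ) (X : ι → Matrix m n ℝ) :
    minner A (∑ j ∈ s, X j) = ∑ j ∈ s, minner A (X j) := by
  simp [minner, Matrix.mul_sum, Matrix.trace_sum]

lemma minner_sum_left {ι : Type*} (s : Finset ι) (A : Matrix m n ℝ) (X : ι → Matrix m n ℝ) :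
    minner (∑ j ∈ s, X j) A = ∑ j ∈ s, minner (X j) A := by
  rw [minner_comm, minner_sum_right]
  exact Finset.sum_congr rfl fun j _ => minner_comm _ _

lemma minner_zero_right (A : Matrix m n ℝ) : minner A 0 = 0 := by simp [minner]

lemma minner_zero_left (A : Matrix m n ℝ) : minner 0 A = 0 := by simp [minner]

lemma eq_zero_of_minner_self (X : Matrix m n ℝ) (h : minner X X = 0) : X = 0 := by
  rw [minner_self_eq] at h
  ext a b
  have h1 := (Finset.sum_eq_zero_iff_of_nonneg (fun i _ => by positivity)).mp h a (mem_univ a)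
  have h2 := (Finset.sum_eq_zero_iff_of_nonneg (fun j _ => by positivity : ∀ j ∈ univ, (0:ℝ) ≤ X a j ^ 2)).mp h1 b (mem_univ b)
  simpa using pow_eq_zero_iff (two_ne_zero) |>.mp h2

set_option linter.unusedSectionVars false in
lemma mul_vecMulVec' (N : Matrix m n ℝ) (u : n → ℝ) (w : n → ℝ) :
    N * vecMulVec u w = vecMulVec (N *ᵥ u) w := by
  ext a b
  simp only [Matrix.mul_apply, vecMulVec_apply, Matrix.mulVec, dotProduct, Finset.sum_mul]
  exact Finset.sum_congr rfl fun i _ => by ring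

set_option linter.unusedSectionVars false in
lemma vecMulVec_mul_vecMulVec' (u v w x : n → ℝ) :
    vecMulVec u v * vecMulVec w x = (v ⬝ᵥ w) • vecMulVec u x := by
  ext a b
  simp only [Matrix.mul_apply, vecMulVec_apply, Matrix.smul_apply, dotProduct,
    smul_eq_mul, Finset.sum_mul, Finset.mul_sum]
  exact Finset.sum_congr rfl fun i _ => by ring

set_option linter.unusedSectionVars false in
lemma trace_vecMulVec' (u w : n → ℝ) : Matrix.trace (vecMulVec u w) = u ⬝ᵥ w := by
  simp [Matrix.trace, Matrix.diag, vecMulVec_apply, dotProduct]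

lemma minner_sub_left {m n : Type*} [Fintype m] [Fintype n] (A X Y : Matrix m n ℝ) :
    minner (X - Y) A = minner X A - minner Y A := by
  rw [minner_comm, minner_sub_right, minner_comm A X, minner_comm A Y]

lemma pair_bound {n dL d0 : ℕ} {δ : ℝ} {A : Fin n → Matrix (Fin dL) (Fin d0) ℝ}
    (hA : RIP 2 δ A) {X Y : Matrix (Fin dL) (Fin d0) ℝ}
    (h1 : (X + Y).rank ≤ 2) (h2 : (X - Y).rank ≤ 2) :
    |(1 / (n : ℝ)) * ∑ i, minner (A i) X * minner (A i) Y - minner X Y|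
      ≤ δ * (minner X X + minner Y Y) / 2 := by
  obtain ⟨hp1, hp2⟩ := hA (X + Y) h1
  obtain ⟨hm1, hm2⟩ := hA (X - Y) h2
  rw [frob_sq] at hp1 hp2 hm1 hm2
  have e1 : minner (X + Y) (X + Y) = minner X X + 2 * minner X Y + minner Y Y := by
    rw [minner_add_right, minner_add_left, minner_add_left, minner_comm Y X]; ring
  have e2 : minner (X - Y) (X - Y) = minner X X - 2 * minner X Y + minner Y Y := by
    rw [minner_sub_right, minner_sub_left, minner_sub_left, minner_comm Y X]; ring
  rw [e1] at hp1 hp2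
  rw [e2] at hm1 hm2
  have hQ : (1 / (n : ℝ)) * ∑ i, minner (A i) (X + Y) ^ 2
      - (1 / (n : ℝ)) * ∑ i, minner (A i) (X - Y) ^ 2
      = 4 * ((1 / (n : ℝ)) * ∑ i, minner (A i) X * minner (A i) Y) := by
    have h : ∀ i : Fin n, minner (A i) (X + Y) ^ 2 - minner (A i) (X - Y) ^ 2
        = 4 * (minner (A i) X * minner (A i) Y) := fun i => by
      rw [minner_add_right, minner_sub_right]; ring
    calc (1 / (n : ℝ)) * ∑ i, minner (A i) (X + Y) ^ 2
        - (1 / (n : ℝ)) * ∑ i, minner (A i) (X - Y) ^ 2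
        = (1 / (n : ℝ)) * ∑ i, (minner (A i) (X + Y) ^ 2 - minner (A i) (X - Y) ^ 2) := by
          rw [← mul_sub, ← Finset.sum_sub_distrib]
      _ = (1 / (n : ℝ)) * ∑ i, 4 * (minner (A i) X * minner (A i) Y) := by
          rw [Finset.sum_congr rfl fun i _ => h i]
      _ = 4 * ((1 / (n : ℝ)) * ∑ i, minner (A i) X * minner (A i) Y) := by
          rw [Finset.mul_sum, Finset.mul_sum, Finset.mul_sum]
          exact Finset.sum_congr rfl fun i _ => by ring
  rw [abs_le]
  constructor <;> nlinarith [hp1, hp2, hm1, hm2, hQ]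

lemma smul_vecMulVec' {n : Type*} [Fintype n] (c : ℝ) (u w : n → ℝ) :
    vecMulVec (c • u) w = c • vecMulVec u w := by
  ext a b; simp [vecMulVec_apply, mul_assoc]

lemma main_aux {n d0 dL : ℕ} (δ : ℝ) (A : Fin n → Matrix (Fin dL) (Fin d0) ℝ)
    (hA : RIP 2 δ A) (M : Matrix (Fin dL) (Fin d0) ℝ)
    (μ : Fin d0 → ℝ) (v : Fin d0 → Fin d0 → ℝ)
    (hμ0 : ∀ j, 0 ≤ μ j)
    (hmv : ∀ j, (Mᵀ * M) *ᵥ v j = μ j • v j)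
    (hortho : ∀ j k, v j ⬝ᵥ v k = if j = k then 1 else 0)
    (hcomplete : ∑ j, vecMulVec (v j) (v j) = 1) :
    |(1 / (n : ℝ)) * ∑ i, minner (A i) M ^ 2 - frobNorm M ^ 2|
        ≤ δ * (∑ j, Real.sqrt (μ j)) ^ 2 ∧ ((∃ j, μ j ≠ 0) → 0 ≤ δ) := by
  classical
  set σ : Fin d0 → ℝ := fun j => Real.sqrt (μ j) with hσdef
  set X : Fin d0 → Matrix (Fin dL) (Fin d0) ℝ :=
    fun j => M * vecMulVec (v j) (v j) with hXdef
  have hσ0 : ∀ j, 0 ≤ σ j := fun j => Real.sqrt_nonneg _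
  have hσσ : ∀ j, σ j * σ j = μ j := fun j => Real.mul_self_sqrt (hμ0 j)
  have hXsum : ∑ j, X j = M := by
    rw [hXdef, ← Matrix.mul_sum, hcomplete, Matrix.mul_one]
  have hsym : ∀ j, (vecMulVec (v j) (v j))ᵀ = vecMulVec (v j) (v j) := fun j => by
    ext a b; simp [vecMulVec_apply, mul_comm]
  have hip : ∀ j k, minner (X j) (X k) = if j = k then μ j else 0 := by
    intro j k
    have hNPk : (Mᵀ * M) * vecMulVec (v k) (v k) = μ k • vecMulVec (v k) (v k) := by
      rw [mul_vecMulVec', hmv k, smul_vecMulVec']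
    have h1 : (X j)ᵀ * X k
        = μ k • (vecMulVec (v j) (v j) * vecMulVec (v k) (v k)) := by
      rw [hXdef]
      rw [Matrix.transpose_mul, hsym j, Matrix.mul_assoc,
        ← Matrix.mul_assoc Mᵀ M, hNPk, Matrix.mul_smul]
    rw [minner, h1, Matrix.trace_smul, vecMulVec_mul_vecMulVec', Matrix.trace_smul,
      trace_vecMulVec', hortho]
    by_cases h : j = k
    · subst h; simp
    · simp [h]
  have hXzero : ∀ j, μ j = 0 → X j = 0 := by
    intro j hj
    exact eq_zero_of_minner_self _ (by rw [hip j j]; simp [hj])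
  have hrank : ∀ (a b : ℝ) (j k : Fin d0), (a • X j + b • X k).rank ≤ 2 := by
    intro a b j k
    have hE : a • X j + b • X k
        = (Matrix.of fun (p : Fin dL) (t : Fin 2) =>
            if t = 0 then a * ∑ i, M p i * v j i else b * ∑ i, M p i * v k i)
          * (Matrix.of fun (t : Fin 2) (q : Fin d0) =>
            if t = 0 then v j q else v k q) := by
      ext p q
      have h1 : ∀ w : Fin d0 → ℝ, ∑ i, M p i * (w i * w q)
          = (∑ i, M p i * w i) * w q := fun w => by
        rw [Finset.sum_mul]; exact Finset.sum_congr rfl fun i _ => by ring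
      simp only [hXdef, Matrix.add_apply, Matrix.smul_apply, Matrix.mul_apply,
        vecMulVec_apply, Fin.sum_univ_two, Matrix.of_apply, smul_eq_mul]
      rw [h1 (v j), h1 (v k)]
      norm_num
      ring
    rw [hE]
    refine le_trans (Matrix.rank_mul_le_right _ _) ?_
    exact (Matrix.rank_le_card_height _).trans (le_of_eq (Fintype.card_fin 2))
  have hpair : ∀ j k, |(1 / (n : ℝ)) * ∑ i, minner (A i) (X j) * minner (A i) (X k)
      - minner (X j) (X k)| ≤ δ * (σ j * σ k) := by
    intro j k
    by_cases hj : μ j = 0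
    · rw [hXzero j hj]
      simp only [minner_zero_right, minner_zero_left, zero_mul, Finset.sum_const_zero,
        mul_zero, sub_zero, abs_zero]
      have : σ j = 0 := by rw [hσdef]; simp [hj]
      rw [this]; simp
    by_cases hk : μ k = 0
    · rw [hXzero k hk]
      simp only [minner_zero_right, mul_zero, Finset.sum_const_zero, sub_zero, abs_zero]
      have : σ k = 0 := by rw [hσdef]; simp [hk]
      rw [this]; simp
    have hjp : 0 < σ j := Real.sqrt_pos.mpr (lt_of_le_of_ne (hμ0 j) (Ne.symm hj))
    have hkp : 0 < σ k := Real.sqrt_pos.mpr (lt_of_le_of_ne (hμ0 k) (Ne.symm hk))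
    have hbr1 : ((σ j)⁻¹ • X j + (σ k)⁻¹ • X k).rank ≤ 2 := hrank _ _ j k
    have hbr2 : ((σ j)⁻¹ • X j - (σ k)⁻¹ • X k).rank ≤ 2 := by
      have := hrank (σ j)⁻¹ (-(σ k)⁻¹) j k
      simpa [sub_eq_add_neg, neg_smul] using this
    have hb := pair_bound hA hbr1 hbr2
    have e1 : minner ((σ j)⁻¹ • X j) ((σ j)⁻¹ • X j) = 1 := by
      rw [minner_smul_left, minner_smul_right, hip, if_pos rfl, ← hσσ j]
      field_simp
    have e2 : minner ((σ k)⁻¹ • X k) ((σ k)⁻¹ • X k) = 1 := by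
      rw [minner_smul_left, minner_smul_right, hip, if_pos rfl, ← hσσ k]
      field_simp
    have e5 : (1 / (n : ℝ)) * ∑ i, minner (A i) ((σ j)⁻¹ • X j) * minner (A i) ((σ k)⁻¹ • X k)
        - minner ((σ j)⁻¹ • X j) ((σ k)⁻¹ • X k)
        = ((σ j)⁻¹ * (σ k)⁻¹)
          * ((1 / (n : ℝ)) * ∑ i, minner (A i) (X j) * minner (A i) (X k)
            - minner (X j) (X k)) := by
      have h : ∀ i : Fin n, minner (A i) ((σ j)⁻¹ • X j) * minner (A i) ((σ k)⁻¹ • X k)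
          = ((σ j)⁻¹ * (σ k)⁻¹) * (minner (A i) (X j) * minner (A i) (X k)) := fun i => by
        rw [minner_smul_right, minner_smul_right]; ring
      rw [Finset.sum_congr rfl fun i _ => h i, ← Finset.mul_sum,
        minner_smul_left, minner_smul_right]
      ring
    rw [e1, e2, e5, abs_mul] at hb
    rw [abs_of_pos (by positivity : (0:ℝ) < (σ j)⁻¹ * (σ k)⁻¹)] at hb
    calc |(1 / (n : ℝ)) * ∑ i, minner (A i) (X j) * minner (A i) (X k) - minner (X j) (X k)|
        = (σ j * σ k) * ((σ j)⁻¹ * (σ k)⁻¹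
          * |(1 / (n : ℝ)) * ∑ i, minner (A i) (X j) * minner (A i) (X k)
            - minner (X j) (X k)|) := by
          field_simp
      _ ≤ (σ j * σ k) * (δ * (1 + 1) / 2) := by
          exact mul_le_mul_of_nonneg_left hb (by positivity)
      _ = δ * (σ j * σ k) := by ring
  have hGM : (1 / (n : ℝ)) * ∑ i, minner (A i) M ^ 2
      = ∑ j, ∑ k, ((1 / (n : ℝ)) * ∑ i, minner (A i) (X j) * minner (A i) (X k)) := by
    have h1 : ∀ i : Fin n, minner (A i) M ^ 2
        = ∑ j, ∑ k, minner (A i) (X j) * minner (A i) (X k) := by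
      intro i
      conv_lhs => rw [← hXsum]
      rw [minner_sum_right, pow_two, Finset.sum_mul_sum]
    rw [Finset.sum_congr rfl fun i _ => h1 i]
    simp only [Finset.mul_sum]
    rw [Finset.sum_comm]
    exact Finset.sum_congr rfl fun j _ => Finset.sum_comm
  have hFM : frobNorm M ^ 2 = ∑ j, ∑ k, minner (X j) (X k) := by
    rw [frob_sq]
    conv_lhs => rw [← hXsum]
    rw [minner_sum_left _ _ _]
    exact Finset.sum_congr rfl fun j _ => minner_sum_right _ _ _
  constructor
  · calc |(1 / (n : ℝ)) * ∑ i, minner (A i) M ^ 2 - frobNorm M ^ 2|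
        = |∑ j, ∑ k, (((1 / (n : ℝ)) * ∑ i, minner (A i) (X j) * minner (A i) (X k))
            - minner (X j) (X k))| := by
          rw [hGM, hFM]
          simp only [← Finset.sum_sub_distrib]
      _ ≤ ∑ j, ∑ k, |((1 / (n : ℝ)) * ∑ i, minner (A i) (X j) * minner (A i) (X k))
            - minner (X j) (X k)| :=
          (Finset.abs_sum_le_sum_abs _ _).trans
            (Finset.sum_le_sum fun j _ => Finset.abs_sum_le_sum_abs _ _)
      _ ≤ ∑ j, ∑ k, δ * (σ j * σ k) :=
          Finset.sum_le_sum fun j _ => Finset.sum_le_sum fun k _ => hpair j k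
      _ = δ * (∑ j, σ j) ^ 2 := by
          rw [pow_two, Finset.sum_mul_sum]
          rw [Finset.mul_sum]
          exact Finset.sum_congr rfl fun j _ => by
            rw [Finset.mul_sum]
  · rintro ⟨j0, hj0⟩
    have hjp : 0 < σ j0 := Real.sqrt_pos.mpr (lt_of_le_of_ne (hμ0 j0) (Ne.symm hj0))
    have hr : ((σ j0)⁻¹ • X j0).rank ≤ 2 := by
      have := hrank (σ j0)⁻¹ 0 j0 j0
      simpa using this
    obtain ⟨h1, h2⟩ := hA _ hr
    rw [frob_sq, minner_smul_left, minner_smul_right, hip, if_pos rfl] at h1 h2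
    have hone : (σ j0)⁻¹ * ((σ j0)⁻¹ * μ j0) = 1 := by
      rw [← hσσ j0]; field_simp
    rw [hone] at h1 h2
    linarith

end Aux

/-- (2,δ)-RIP implies approximate isometry on all matrices, with error
    2δ‖M‖_*². -/
theorem rip_relax {n d0 dL : ℕ} (δ : ℝ)
    (A : Fin n → Matrix (Fin dL) (Fin d0) ℝ) (hA : RIP 2 δ A)
    (M : Matrix (Fin dL) (Fin d0) ℝ) :
    |(1 / (n : ℝ)) * ∑ i, minner (A i) M ^ 2 - frobNorm M ^ 2|
      ≤ 2 * δ * nuclearNorm M ^ 2 := by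
  classical
  have hN : (Mᵀ * M).IsHermitian := by
    simpa [Matrix.conjTranspose_eq_transpose_of_trivial] using
      Matrix.isHermitian_conjTranspose_mul_self M
  have hMH : Mᴴ = Mᵀ := by ext i j; simp [Matrix.conjTranspose_apply]
  set μ : Fin d0 → ℝ := hN.eigenvalues with hμdef
  set v : Fin d0 → Fin d0 → ℝ := fun j => ⇑(hN.eigenvectorBasis j) with hvdef
  have hμ0 : ∀ j, 0 ≤ μ j := fun j => Matrix.eigenvalues_conjTranspose_mul_self_nonneg M j
  have hmv : ∀ j, (Mᵀ * M) *ᵥ v j = μ j • v j := fun j => by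
    have h := hN.mulVec_eigenvectorBasis j
    calc (Mᵀ * M) *ᵥ v j = (Mᴴ * M) *ᵥ v j := by rw [hMH]
      _ = μ j • v j := h
  have hortho : ∀ j k, v j ⬝ᵥ v k = if j = k then 1 else 0 := by
    intro j k
    have h := orthonormal_iff_ite.mp hN.eigenvectorBasis.orthonormal j k
    simpa [dotProduct, PiLp.inner_apply, RCLike.inner_apply, hvdef, mul_comm] using h
  have hcomplete : ∑ j, vecMulVec (v j) (v j) = (1 : Matrix (Fin d0) (Fin d0) ℝ) := by
    have h := Matrix.mem_unitaryGroup_iff.mp hN.eigenvectorUnitary.2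
    ext a b
    have h2 : ((hN.eigenvectorUnitary : Matrix (Fin d0) (Fin d0) ℝ)
        * star (hN.eigenvectorUnitary : Matrix (Fin d0) (Fin d0) ℝ)) a b
        = (1 : Matrix (Fin d0) (Fin d0) ℝ) a b := by rw [h]
    rw [← h2]
    simp [Matrix.sum_apply, vecMulVec_apply, Matrix.mul_apply, Matrix.star_apply,
      Matrix.IsHermitian.eigenvectorUnitary_apply, hvdef, mul_comm]
  obtain ⟨key, hδ⟩ := main_aux δ A hA M μ v hμ0 hmv hortho hcomplete
  have hnuc : nuclearNorm M = ∑ j, Real.sqrt (μ j) := rfl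
  rw [hnuc]
  by_cases hall : ∀ j, μ j = 0
  · have hz : ∑ j, Real.sqrt (μ j) = 0 := Finset.sum_eq_zero fun j _ => by simp [hall j]
    rw [hz] at key ⊢
    simpa using key
  · push_neg at hall
    have h0 : 0 ≤ δ := hδ hall
    nlinarith [key, sq_nonneg (∑ j, Real.sqrt (μ j)), abs_nonneg ((1 / (n : ℝ)) * ∑ i, minner (A i) M ^ 2 - frobNorm M ^ 2)]
end
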